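/- For integers $n \geq 2$ and $m \geq 0$, one has $\sum_{i=1}^{n}\binom{n}{i}\sum_{0 \leq j \leq i-1,\ j \equiv n+m \pmod 2} \binom{j+m}{i-1}\binom{i-1}{j} = \sum_{i=1}^{n-1} 2^{i-1}\binom{m+i}{i} + \varepsilon$, where $\varepsilon = 1$ if $n+m$ is even and $\varepsilon = 0$ if $n+m$ is odd. -/

import Mathlib

open Finset

/-- Trinomial revision: `C(j+m, k) C(k, j) = C(j+m, j) C(m, k-j)` for `j ≤ k`. -/
lemma aux_trinom (m j k : ℕ) (hj : j ≤ k) :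
    (j + m).choose k * k.choose j = (j + m).choose j * m.choose (k - j) := by
  rcases le_or_gt k (j + m) with h | h
  · rw [Nat.choose_mul hj]
    congr 1
    · congr 1; omega
  · rw [Nat.choose_eq_zero_of_lt h, Nat.choose_eq_zero_of_lt (by omega : m < k - j)]
    ring

/-- `∑_{j=0}^{n} C(m+j, j) C(n+m, m+j) = 2^n C(n+m, m)`. -/
lemma aux_T (n m : ℕ) :
    ∑ j ∈ range (n + 1), (m + j).choose j * (n + m).choose (m + j)
      = 2 ^ n * (n + m).choose m := by
  have h : ∀ j ∈ range (n + 1),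
      (m + j).choose j * (n + m).choose (m + j) = (n + m).choose m * n.choose j := by
    intro j hj
    rw [mem_range] at hj
    have hj' : j ≤ n := by omega
    rw [← Nat.choose_symm_add, mul_comm,
      Nat.choose_mul (by omega : m ≤ m + j)]
    congr 1
    · congr 1 <;> omega
  rw [Finset.sum_congr rfl h, ← Finset.mul_sum, Nat.sum_range_choose, mul_comm]

/-- Alternating version: `∑_{j=0}^{n} (-1)^j C(m+j, j) C(n+m, m+j) = 0` for `n ≥ 1`. -/
lemma aux_T_alt (n m : ℕ) (hn : n ≠ 0) :
    ∑ j ∈ range (n + 1), (-1 : ℤ) ^ j * ((m + j).choose j * (n + m).choose (m + j)) = 0 := by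
  have h : ∀ j ∈ range (n + 1),
      (-1 : ℤ) ^ j * ((m + j).choose j * (n + m).choose (m + j))
        = ((n + m).choose m : ℤ) * ((-1) ^ j * n.choose j) := by
    intro j hj
    rw [mem_range] at hj
    have := aux_T n m
    have h1 : (m + j).choose j * (n + m).choose (m + j) = (n + m).choose m * n.choose j := by
      rw [← Nat.choose_symm_add, mul_comm,
        Nat.choose_mul (by omega : m ≤ m + j)]
      congr 1
      · congr 1 <;> omega
    have h1' : (((m + j).choose j : ℤ)) * ((n + m).choose (m + j) : ℤ)
        = ((n + m).choose m : ℤ) * (n.choose j : ℤ) := by exact_mod_cast h1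
    calc (-1 : ℤ) ^ j * ((m + j).choose j * (n + m).choose (m + j))
        = ((m + j).choose j : ℤ) * ((n + m).choose (m + j) : ℤ) * (-1) ^ j := by ring
      _ = ((n + m).choose m : ℤ) * ((-1) ^ j * n.choose j) := by rw [h1']; ring
  rw [Finset.sum_congr rfl h, ← Finset.mul_sum,
    Int.alternating_sum_range_choose, if_neg hn, mul_zero]

/-- `∑_{j<k+1} C(m+j,j) C(k+1+m, m+j+1) = 1 + ∑_{i=1}^{k} 2^i C(m+i,i)`. -/
lemma aux_G (m : ℕ) : ∀ k : ℕ,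
    ∑ j ∈ range (k + 1), (m + j).choose j * (k + 1 + m).choose (m + j + 1)
      = 1 + ∑ i ∈ Icc 1 k, 2 ^ i * (m + i).choose i := by
  intro k
  induction k with
  | zero => simp [show 1 + m = m + 1 by omega]
  | succ k ih =>
    have pas : ∀ j : ℕ, (k + 1 + 1 + m).choose (m + j + 1)
        = (k + 1 + m).choose (m + j) + (k + 1 + m).choose (m + j + 1) := by
      intro j
      have : k + 1 + 1 + m = (k + 1 + m) + 1 := by omega
      rw [this, Nat.choose_succ_succ]
    calc ∑ j ∈ range (k + 1 + 1), (m + j).choose j * (k + 1 + 1 + m).choose (m + j + 1)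
        = ∑ j ∈ range (k + 2), ((m + j).choose j * (k + 1 + m).choose (m + j)
            + (m + j).choose j * (k + 1 + m).choose (m + j + 1)) := by
          refine Finset.sum_congr rfl fun j _ => ?_
          rw [pas, Nat.mul_add]
      _ = (∑ j ∈ range (k + 2), (m + j).choose j * (k + 1 + m).choose (m + j))
          + ∑ j ∈ range (k + 2), (m + j).choose j * (k + 1 + m).choose (m + j + 1) := by
          rw [Finset.sum_add_distrib]
      _ = 2 ^ (k + 1) * (k + 1 + m).choose m
          + ∑ j ∈ range (k + 1), (m + j).choose j * (k + 1 + m).choose (m + j + 1) := by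
          rw [aux_T (k + 1) m, Finset.sum_range_succ,
            Nat.choose_eq_zero_of_lt (show k + 1 + m < m + (k + 1) + 1 by omega),
            Nat.mul_zero, Nat.add_zero]
          simp
      _ = 2 ^ (k + 1) * (k + 1 + m).choose m + (1 + ∑ i ∈ Icc 1 k, 2 ^ i * (m + i).choose i) := by
          rw [ih]
      _ = 1 + ∑ i ∈ Icc 1 (k + 1), 2 ^ i * (m + i).choose i := by
          rw [Finset.sum_Icc_succ_top (by omega : 1 ≤ k + 1)]
          have : (k + 1 + m).choose m = (m + (k + 1)).choose (k + 1) := by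
            rw [show k + 1 + m = m + (k + 1) by omega, Nat.choose_symm_add]
          rw [this]; ring

/-- Alternating version: `∑_{j<k+1} (-1)^j C(m+j,j) C(k+1+m, m+j+1) = 1`. -/
lemma aux_H (m : ℕ) : ∀ k : ℕ,
    ∑ j ∈ range (k + 1), (-1 : ℤ) ^ j * ((m + j).choose j * (k + 1 + m).choose (m + j + 1))
      = 1 := by
  intro k
  induction k with
  | zero => simp [show 1 + m = m + 1 by omega]
  | succ k ih =>
    have pas : ∀ j : ℕ, (k + 1 + 1 + m).choose (m + j + 1)
        = (k + 1 + m).choose (m + j) + (k + 1 + m).choose (m + j + 1) := by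
      intro j
      have : k + 1 + 1 + m = (k + 1 + m) + 1 := by omega
      rw [this, Nat.choose_succ_succ]
    calc ∑ j ∈ range (k + 1 + 1),
          (-1 : ℤ) ^ j * ((m + j).choose j * (k + 1 + 1 + m).choose (m + j + 1))
        = ∑ j ∈ range (k + 2), ((-1 : ℤ) ^ j * ((m + j).choose j * (k + 1 + m).choose (m + j))
            + (-1 : ℤ) ^ j * ((m + j).choose j * (k + 1 + m).choose (m + j + 1))) := by
          refine Finset.sum_congr rfl fun j _ => ?_
          rw [pas]; push_cast; ring
      _ = (∑ j ∈ range (k + 2), (-1 : ℤ) ^ j * ((m + j).choose j * (k + 1 + m).choose (m + j)))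
          + ∑ j ∈ range (k + 2),
              (-1 : ℤ) ^ j * ((m + j).choose j * (k + 1 + m).choose (m + j + 1)) := by
          rw [Finset.sum_add_distrib]
      _ = 0 + ∑ j ∈ range (k + 1),
              (-1 : ℤ) ^ j * ((m + j).choose j * (k + 1 + m).choose (m + j + 1)) := by
          rw [aux_T_alt (k + 1) m (by omega), Finset.sum_range_succ,
            Nat.choose_eq_zero_of_lt (show k + 1 + m < m + (k + 1) + 1 by omega)]
          simp
      _ = 1 := by rw [ih, zero_add]

/-- Inner sum evaluation via trinomial revision and Vandermonde. -/
lemma aux_inner (n m j : ℕ) (hj : j < n) :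
    ∑ i ∈ Icc (j + 1) n, n.choose i * ((j + m).choose (i - 1) * (i - 1).choose j)
      = (m + j).choose j * (n + m).choose (m + j + 1) := by
  rw [← Finset.Ico_add_one_right_eq_Icc, Finset.sum_Ico_eq_sum_range]
  have hlen : n + 1 - (j + 1) = n - j := by omega
  rw [hlen]
  have step : ∀ t ∈ range (n - j),
      n.choose (j + 1 + t) * ((j + m).choose (j + 1 + t - 1) * (j + 1 + t - 1).choose j)
        = (j + m).choose j * (m.choose t * n.choose (n - j - 1 - t)) := by
    intro t ht
    rw [mem_range] at ht
    have h1 : j + 1 + t - 1 = j + t := by omega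
    rw [h1, aux_trinom m j (j + t) (by omega), show j + t - j = t by omega]
    have h2 : n.choose (j + 1 + t) = n.choose (n - j - 1 - t) := by
      rw [← Nat.choose_symm (by omega : j + 1 + t ≤ n)]
      congr 1; omega
    rw [h2]; ring
  rw [Finset.sum_congr rfl step, ← Finset.mul_sum]
  have vdm : (m + n).choose (n - j - 1)
      = ∑ t ∈ range (n - j), m.choose t * n.choose (n - j - 1 - t) := by
    rw [Nat.add_choose_eq,
      Finset.Nat.sum_antidiagonal_eq_sum_range_succ (fun a b => m.choose a * n.choose b),
      show (n - j - 1).succ = n - j by omega]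
  rw [← vdm]
  have hsym : (m + n).choose (n - j - 1) = (n + m).choose (m + j + 1) := by
    rw [show m + n = n + m by omega, ← Nat.choose_symm (by omega : m + j + 1 ≤ n + m)]
    congr 1; omega
  rw [hsym, show j + m = m + j by omega]

theorem rank_tau_cohomology_eq (n m : ℕ) (hn : 2 ≤ n) :
    ∑ i ∈ Finset.Icc 1 n, n.choose i *
        ∑ j ∈ (Finset.range i).filter (fun j => j % 2 = (n + m) % 2),
          (j + m).choose (i - 1) * (i - 1).choose j
      = (∑ i ∈ Finset.Icc 1 (n - 1), 2 ^ (i - 1) * (m + i).choose i)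
        + if Even (n + m) then 1 else 0 := by
  -- Step 1: swap the order of summation and evaluate the inner sum.
  have swap : ∑ i ∈ Finset.Icc 1 n, n.choose i *
        ∑ j ∈ (Finset.range i).filter (fun j => j % 2 = (n + m) % 2),
          (j + m).choose (i - 1) * (i - 1).choose j
      = ∑ j ∈ (Finset.range n).filter (fun j => j % 2 = (n + m) % 2),
          (m + j).choose j * (n + m).choose (m + j + 1) := by
    have h1 : ∀ i ∈ Finset.Icc 1 n, n.choose i *
          ∑ j ∈ (Finset.range i).filter (fun j => j % 2 = (n + m) % 2),
            (j + m).choose (i - 1) * (i - 1).choose j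
        = ∑ j ∈ (Finset.range i).filter (fun j => j % 2 = (n + m) % 2),
            n.choose i * ((j + m).choose (i - 1) * (i - 1).choose j) := fun i _ =>
      Finset.mul_sum _ _ _
    rw [Finset.sum_congr rfl h1]
    rw [Finset.sum_comm' (t' := (Finset.range n).filter (fun j => j % 2 = (n + m) % 2))
      (s' := fun j => Finset.Icc (j + 1) n) ?_]
    · refine Finset.sum_congr rfl fun j hj => ?_
      rw [Finset.mem_filter, Finset.mem_range] at hj
      exact aux_inner n m j hj.1
    · intro i j
      simp only [Finset.mem_Icc, Finset.mem_filter, Finset.mem_range]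
      omega
  rw [swap]
  -- Step 2: combine the plain and alternating sums over ℤ.
  have hG := aux_G m (n - 1)
  have hH := aux_H m (n - 1)
  rw [show n - 1 + 1 = n by omega] at hG hH
  -- double both sides and work in ℤ
  have key : (2 : ℤ) * ∑ j ∈ (Finset.range n).filter (fun j => j % 2 = (n + m) % 2),
        ((m + j).choose j * (n + m).choose (m + j + 1) : ℤ)
      = (∑ j ∈ Finset.range n, ((m + j).choose j * (n + m).choose (m + j + 1) : ℤ))
        + (-1 : ℤ) ^ (n + m) *
          ∑ j ∈ Finset.range n, (-1 : ℤ) ^ j *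
            ((m + j).choose j * (n + m).choose (m + j + 1)) := by
    rw [Finset.mul_sum, Finset.sum_filter, Finset.mul_sum, ← Finset.sum_add_distrib]
    refine Finset.sum_congr rfl fun j _ => ?_
    by_cases h : j % 2 = (n + m) % 2
    · rw [if_pos h]
      have : (-1 : ℤ) ^ (n + m) * ((-1) ^ j * ((m + j).choose j * (n + m).choose (m + j + 1)))
          = ((-1 : ℤ) ^ (n + m + j)) * ((m + j).choose j * (n + m).choose (m + j + 1)) := by
        rw [pow_add]; ring
      rw [this]
      have he : Even (n + m + j) := by
        rcases Nat.even_or_odd j with hj | hj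
        · have : Even (n + m) := by
            rw [Nat.even_iff]; rw [Nat.even_iff] at hj; omega
          exact this.add hj
        · have : Odd (n + m) := by
            rw [Nat.odd_iff]; rw [Nat.odd_iff] at hj; omega
          exact (Odd.add_odd this hj)
      rw [he.neg_one_pow]; ring
    · rw [if_neg h]
      have : (-1 : ℤ) ^ (n + m) * ((-1) ^ j * ((m + j).choose j * (n + m).choose (m + j + 1)))
          = ((-1 : ℤ) ^ (n + m + j)) * ((m + j).choose j * (n + m).choose (m + j + 1)) := by
        rw [pow_add]; ring
      rw [this]
      have ho : Odd (n + m + j) := by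
        rw [Nat.odd_iff]
        rcases Nat.even_or_odd j with hj | hj <;>
          [rw [Nat.even_iff] at hj; rw [Nat.odd_iff] at hj] <;> omega
      rw [ho.neg_one_pow]; ring
  rw [hH, mul_one] at key
  have hGZ : (∑ j ∈ Finset.range n, ((m + j).choose j * (n + m).choose (m + j + 1) : ℤ))
      = ((1 + ∑ i ∈ Icc 1 (n - 1), 2 ^ i * (m + i).choose i : ℕ) : ℤ) := by
    rw [← hG]; push_cast; rfl
  rw [hGZ] at key
  -- Step 3: conclude by injectivity of the cast (after doubling).
  have final : (2 : ℤ) * ∑ j ∈ (Finset.range n).filter (fun j => j % 2 = (n + m) % 2),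
        ((m + j).choose j * (n + m).choose (m + j + 1) : ℤ)
      = 2 * (((∑ i ∈ Finset.Icc 1 (n - 1), 2 ^ (i - 1) * (m + i).choose i)
          + if Even (n + m) then 1 else 0 : ℕ) : ℤ) := by
    rw [key]
    have hdouble : ((∑ i ∈ Icc 1 (n - 1), 2 ^ i * (m + i).choose i : ℕ) : ℤ)
        = 2 * ((∑ i ∈ Finset.Icc 1 (n - 1), 2 ^ (i - 1) * (m + i).choose i : ℕ) : ℤ) := by
      push_cast
      rw [Finset.mul_sum]
      refine Finset.sum_congr rfl fun i hi => ?_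
      rw [Finset.mem_Icc] at hi
      rw [show (2 : ℤ) * (2 ^ (i - 1) * (m + i).choose i) = 2 ^ (i - 1 + 1) * (m + i).choose i
        by rw [pow_succ]; ring, show i - 1 + 1 = i by omega]
    rcases Nat.even_or_odd (n + m) with he | ho
    · rw [if_pos he, he.neg_one_pow]
      push_cast [hdouble]
      ring
    · rw [if_neg (Nat.not_even_iff_odd.mpr ho), ho.neg_one_pow]
      push_cast [hdouble]
      ring
  have h2 := mul_left_cancel₀ (by norm_num : (2 : ℤ) ≠ 0) final
  exact_mod_cast h2
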